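/- Let μ be a probability measure on ℝ with finite first moment, F its CDF and F⁻¹ its quantile function, and let 0 ≤ τ < τ' ≤ 1 with m = (τ + τ')/2 ∈ (0,1). If F⁻¹ is continuous at m, then θ* = F⁻¹(m) is the unique minimizer over θ ∈ ℝ of g(θ) = ∫_τ^{τ'} |F⁻¹(ω) − θ| dω. -/

import Mathlib

open MeasureTheory Set

/-- The CDF of a measure on ℝ: `F(y) = μ((-∞, y])`. -/
noncomputable def cdfFn (μ : Measure ℝ) (y : ℝ) : ℝ := (μ (Iic y)).toReal

/-- The quantile function (generalized inverse CDF): `F⁻¹(ω) = inf {y | ω ≤ F(y)}`. -/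
noncomputable def quantileFn (μ : Measure ℝ) (ω : ℝ) : ℝ := sInf {y : ℝ | ω ≤ cdfFn μ y}

open ProbabilityTheory Filter Topology

section QAux
variable {μ : Measure ℝ} [IsProbabilityMeasure μ]

lemma cdfFn_eq_cdf : cdfFn μ = cdf μ := funext fun x => (cdf_eq_real μ x).symm

lemma quantile_set_nonempty {ω : ℝ} (hω1 : ω < 1) : {y : ℝ | ω ≤ cdfFn μ y}.Nonempty := by
  have := (tendsto_cdf_atTop (μ := μ)).eventually_const_lt hω1
  rcases this.exists with ⟨y, hy⟩
  exact ⟨y, by rw [cdfFn_eq_cdf]; exact hy.le⟩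

lemma quantile_set_bddBelow {ω : ℝ} (hω0 : 0 < ω) : BddBelow {y : ℝ | ω ≤ cdfFn μ y} := by
  have := (tendsto_cdf_atBot (μ := μ)).eventually_lt_const hω0
  rcases this.exists with ⟨y₀, hy₀⟩
  refine ⟨y₀, fun y hy => ?_⟩
  by_contra h
  push_neg at h
  have : cdf μ y ≤ cdf μ y₀ := monotone_cdf μ h.le
  rw [cdfFn_eq_cdf] at hy
  exact absurd hy (not_le.mpr (lt_of_le_of_lt this hy₀))

lemma le_cdfFn_quantile {ω : ℝ} (hω0 : 0 < ω) (hω1 : ω < 1) :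
    ω ≤ cdfFn μ (quantileFn μ ω) := by
  rw [cdfFn_eq_cdf]
  set a := quantileFn μ ω with ha
  have hcont : Tendsto (cdf μ) (𝓝[>] a) (𝓝 (cdf μ a)) :=
    ((cdf μ).right_continuous a).mono_left (nhdsWithin_mono _ Ioi_subset_Ici_self)
  refine ge_of_tendsto hcont (eventually_nhdsWithin_of_forall fun y hy => ?_)
  obtain ⟨z, hz, hzy⟩ := exists_lt_of_csInf_lt (quantile_set_nonempty hω1) hy
  calc ω ≤ cdfFn μ z := hz
    _ = cdf μ z := by rw [cdfFn_eq_cdf]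
    _ ≤ cdf μ y := monotone_cdf μ hzy.le

lemma quantile_le_iff {ω x : ℝ} (hω0 : 0 < ω) (hω1 : ω < 1) :
    quantileFn μ ω ≤ x ↔ ω ≤ cdfFn μ x := by
  constructor
  · intro h
    calc ω ≤ cdfFn μ (quantileFn μ ω) := le_cdfFn_quantile hω0 hω1
      _ ≤ cdfFn μ x := by
          rw [cdfFn_eq_cdf]; exact monotone_cdf μ h
  · intro h
    exact csInf_le (quantile_set_bddBelow hω0) h

lemma quantile_monoOn : MonotoneOn (quantileFn μ) (Ioo (0:ℝ) 1) := by
  intro a ha b hb hab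
  rw [quantile_le_iff ha.1 ha.2]
  exact hab.trans (le_cdfFn_quantile hb.1 hb.2)

lemma quantile_aemeasurable :
    AEMeasurable (quantileFn μ) (volume.restrict (Ioo (0:ℝ) 1)) :=
  aemeasurable_restrict_of_monotoneOn measurableSet_Ioo quantile_monoOn

lemma map_quantile :
    (volume.restrict (Ioo (0:ℝ) 1)).map (quantileFn μ) = μ := by
  haveI : IsProbabilityMeasure (volume.restrict (Ioo (0:ℝ) 1)) := by
    constructor
    rw [Measure.restrict_apply_univ, Real.volume_Ioo]
    norm_num
  haveI : IsProbabilityMeasure ((volume.restrict (Ioo (0:ℝ) 1)).map (quantileFn μ)) :=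
    Measure.isProbabilityMeasure_map quantile_aemeasurable
  refine Measure.ext_of_Iic _ _ fun x => ?_
  rw [Measure.map_apply_of_aemeasurable quantile_aemeasurable measurableSet_Iic,
    Measure.restrict_apply' measurableSet_Ioo]
  have hle1 : cdfFn μ x ≤ 1 := by rw [cdfFn_eq_cdf]; exact cdf_le_one _ _
  have h0 : 0 ≤ cdfFn μ x := by rw [cdfFn_eq_cdf]; exact cdf_nonneg _ _
  have hsub1 : Ioo 0 (cdfFn μ x) ⊆ quantileFn μ ⁻¹' Iic x ∩ Ioo 0 1 := by
    intro ω hω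
    have hω1 : ω < 1 := lt_of_lt_of_le hω.2 hle1
    refine ⟨?_, hω.1, hω1⟩
    exact (quantile_le_iff hω.1 hω1).mpr hω.2.le
  have hsub2 : quantileFn μ ⁻¹' Iic x ∩ Ioo 0 1 ⊆ Ioc 0 (cdfFn μ x) := by
    intro ω ⟨h1, h2⟩
    exact ⟨h2.1, (quantile_le_iff h2.1 h2.2).mp h1⟩
  have : volume (quantileFn μ ⁻¹' Iic x ∩ Ioo 0 1) = ENNReal.ofReal (cdfFn μ x) := by
    refine le_antisymm ?_ ?_
    · calc volume _ ≤ volume (Ioc 0 (cdfFn μ x)) := measure_mono hsub2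
        _ = ENNReal.ofReal (cdfFn μ x) := by rw [Real.volume_Ioc, sub_zero]
    · calc ENNReal.ofReal (cdfFn μ x) = volume (Ioo 0 (cdfFn μ x)) := by
            rw [Real.volume_Ioo, sub_zero]
        _ ≤ _ := measure_mono hsub1
  rw [this, cdfFn_eq_cdf, ofReal_cdf]

lemma integrableOn_quantile (hint : Integrable (fun x : ℝ => x) μ) :
    IntegrableOn (quantileFn μ) (Ioo (0:ℝ) 1) := by
  have h : Integrable (fun x : ℝ => x) ((volume.restrict (Ioo (0:ℝ) 1)).map (quantileFn μ)) := by
    rw [map_quantile]; exact hint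
  exact (integrable_map_measure measurable_id.aestronglyMeasurable quantile_aemeasurable).mp h

lemma helper_lt (f : ℝ → ℝ) (τ τ' m θs d δ : ℝ) (hτm : τ < m) (hmτ' : m < τ')
    (hmid : m - τ = τ' - m) (hd : 0 < d) (hδ : 0 < δ)
    (hf : IntegrableOn f (Ioc τ τ') volume)
    (hmono : ∀ ω ∈ Ioo τ m, f ω ≤ θs)
    (hnear : ∀ ω, |ω - m| < δ → |f ω - θs| < d / 4) :
    (∫ ω in τ..τ', |f ω - θs|) < ∫ ω in τ..τ', |f ω - (θs + d)| := by
  have hττ' : τ ≤ τ' := by linarith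
  set c := min τ' (m + δ / 2) with hc
  have hmc : m < c := lt_min hmτ' (by linarith)
  have hcτ' : c ≤ τ' := min_le_left _ _
  set h : ℝ → ℝ := fun ω => |f ω - (θs + d)| - |f ω - θs| with hdefh
  have hconst : ∀ (s : Set ℝ) (k : ℝ), volume s < ⊤ → IntegrableOn (fun _ : ℝ => k) s volume :=
    fun s k hs => integrableOn_const hs.ne
  have hI1 : IntegrableOn (fun ω => |f ω - (θs + d)|) (Ioc τ τ') volume :=
    (hf.sub (hconst _ _ measure_Ioc_lt_top)).abs
  have hI2 : IntegrableOn (fun ω => |f ω - θs|) (Ioc τ τ') volume :=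
    (hf.sub (hconst _ _ measure_Ioc_lt_top)).abs
  have hIh : IntegrableOn h (Ioc τ τ') volume := hI1.sub hI2
  -- lower bounds on pieces
  have hb3 : ∀ ω, -d ≤ h ω := by
    intro ω
    have h1 := abs_sub_abs_le_abs_sub (f ω - θs) (f ω - (θs + d))
    have h2 : (f ω - θs) - (f ω - (θs + d)) = d := by ring
    rw [h2, abs_of_pos hd] at h1
    simp only [hdefh]
    linarith
  have key : 0 < ∫ ω in Ioc τ τ', h ω := by
    have u0 : (∫ ω in Ioc τ τ', h ω) =
        (∫ ω in Ioc τ m, h ω) + ∫ ω in Ioc m τ', h ω := by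
      rw [← Ioc_union_Ioc_eq_Ioc hτm.le hmτ'.le,
        setIntegral_union (Ioc_disjoint_Ioc_of_le le_rfl) measurableSet_Ioc
          (hIh.mono_set (Ioc_subset_Ioc_right hmτ'.le))
          (hIh.mono_set (Ioc_subset_Ioc_left hτm.le))]
    have u1 : (∫ ω in Ioc m τ', h ω) =
        (∫ ω in Ioc m c, h ω) + ∫ ω in Ioc c τ', h ω := by
      rw [← Ioc_union_Ioc_eq_Ioc hmc.le hcτ',
        setIntegral_union (Ioc_disjoint_Ioc_of_le le_rfl) measurableSet_Ioc
          ((hIh.mono_set (Ioc_subset_Ioc_left hτm.le)).mono_set (Ioc_subset_Ioc_right hcτ'))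
          ((hIh.mono_set (Ioc_subset_Ioc_left hτm.le)).mono_set (Ioc_subset_Ioc_left hmc.le))]
    have b1 : (m - τ) * d ≤ ∫ ω in Ioc τ m, h ω := by
      rw [integral_Ioc_eq_integral_Ioo]
      have hv : (∫ _ in Ioo τ m, (d : ℝ)) = (m - τ) * d := by
        rw [setIntegral_const, Real.volume_real_Ioo_of_le (by linarith), smul_eq_mul]
      rw [← hv]
      refine setIntegral_mono_on (hconst _ _ measure_Ioo_lt_top)
        ((hIh.mono_set (Ioc_subset_Ioc_right hmτ'.le)).mono_set Ioo_subset_Ioc_self)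
        measurableSet_Ioo (fun ω hω => ?_)
      have hfω := hmono ω hω
      simp only [hdefh]
      rw [abs_of_nonpos (by linarith), abs_of_nonpos (by linarith)]
      ring_nf
      linarith
    have b2 : (c - m) * (d / 2) ≤ ∫ ω in Ioc m c, h ω := by
      rw [integral_Ioc_eq_integral_Ioo]
      have hv : (∫ _ in Ioo m c, (d / 2 : ℝ)) = (c - m) * (d / 2) := by
        rw [setIntegral_const, Real.volume_real_Ioo_of_le (by linarith), smul_eq_mul]
      rw [← hv]
      refine setIntegral_mono_on (hconst _ _ measure_Ioo_lt_top)
        (((hIh.mono_set (Ioc_subset_Ioc_left hτm.le)).mono_set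
          (Ioc_subset_Ioc_right hcτ')).mono_set Ioo_subset_Ioc_self)
        measurableSet_Ioo (fun ω hω => ?_)
      have hωδ : |ω - m| < δ := by
        rw [abs_of_pos (by linarith [hω.1] : (0:ℝ) < ω - m)]
        have : ω < m + δ / 2 := lt_of_lt_of_le hω.2 (min_le_right _ _)
        linarith
      have hnearω := hnear ω hωδ
      have habs := abs_lt.mp hnearω
      simp only [hdefh]
      rw [abs_of_nonpos (by linarith)]
      have : |f ω - θs| < d / 4 := hnearω
      linarith [abs_lt.mp this]
    have b3 : (τ' - c) * (-d) ≤ ∫ ω in Ioc c τ', h ω := by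
      rw [integral_Ioc_eq_integral_Ioo]
      have hv : (∫ _ in Ioo c τ', (-d : ℝ)) = (τ' - c) * (-d) := by
        rw [setIntegral_const, Real.volume_real_Ioo_of_le (by linarith), smul_eq_mul]
      rw [← hv]
      refine setIntegral_mono_on (hconst _ _ measure_Ioo_lt_top)
        (((hIh.mono_set (Ioc_subset_Ioc_left hτm.le)).mono_set
          (Ioc_subset_Ioc_left hmc.le)).mono_set Ioo_subset_Ioc_self)
        measurableSet_Ioo (fun ω _ => hb3 ω)
    rw [u0, u1]
    nlinarith [mul_pos hd (sub_pos.2 hmc)]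
  have hsub : (∫ ω in Ioc τ τ', h ω) =
      (∫ ω in Ioc τ τ', |f ω - (θs + d)|) - ∫ ω in Ioc τ τ', |f ω - θs| :=
    integral_sub hI1 hI2
  rw [intervalIntegral.integral_of_le hττ', intervalIntegral.integral_of_le hττ']
  linarith [key, hsub.symm.le]

end QAux

/-- if `F⁻¹` is continuous at `m = (τ+τ')/2 ∈ (0,1)`, then `F⁻¹(m)` is the unique
minimizer of `g(θ) = ∫_τ^{τ'} |F⁻¹(ω) - θ| dω`. -/
theorem quantile_midpoint_unique_minimizer
    (μ : Measure ℝ) [IsProbabilityMeasure μ] (hint : Integrable (fun x : ℝ => x) μ)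
    (τ τ' : ℝ) (hτ : 0 ≤ τ) (hττ' : τ < τ') (hτ' : τ' ≤ 1)
    (m : ℝ) (hm : m = (τ + τ') / 2) (hm' : m ∈ Set.Ioo (0 : ℝ) 1)
    (hcont : ContinuousAt (quantileFn μ) m) :
    (∀ θ : ℝ,
      (∫ ω in τ..τ', |quantileFn μ ω - quantileFn μ m|) ≤ ∫ ω in τ..τ', |quantileFn μ ω - θ|) ∧
    (∀ θ : ℝ,
      (∀ θ' : ℝ,
        (∫ ω in τ..τ', |quantileFn μ ω - θ|) ≤ ∫ ω in τ..τ', |quantileFn μ ω - θ'|) →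
      θ = quantileFn μ m) := by
  obtain ⟨hm0, hm1⟩ := hm'
  set q := quantileFn μ with hq
  have hτm : τ < m := by rw [hm]; linarith
  have hmτ' : m < τ' := by rw [hm]; linarith
  have hmid : m - τ = τ' - m := by rw [hm]; ring
  have hqint : IntegrableOn q (Ioc τ τ') := by
    have h1 : IntegrableOn q (Ioo τ τ') :=
      (integrableOn_quantile hint).mono_set (Ioo_subset_Ioo hτ hτ')
    rwa [IntegrableOn, ← Measure.restrict_congr_set Ioo_ae_eq_Ioc]
  have key : ∀ θ : ℝ, θ ≠ q m →
      (∫ ω in τ..τ', |q ω - q m|) < ∫ ω in τ..τ', |q ω - θ| := by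
    intro θ hne
    rcases hne.lt_or_gt with hlt | hgt
    · -- θ < q m : reflect
      set d := q m - θ with hd
      have hd0 : 0 < d := by simp [hd]; linarith
      obtain ⟨δ, hδ0, Hδ⟩ := Metric.continuousAt_iff.mp hcont (d / 4) (by linarith)
      set f : ℝ → ℝ := fun ω => -q (τ + τ' - ω) with hf
      have hrefl : ∀ θ₀ : ℝ, (∫ ω in τ..τ', |q ω - θ₀|) = ∫ ω in τ..τ', |f ω - (-θ₀)| := by
        intro θ₀
        have := intervalIntegral.integral_comp_sub_left (a := τ) (b := τ') (fun x => |q x - θ₀|) (τ + τ')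
        have h1 : τ + τ' - τ' = τ := by ring
        have h2 : τ + τ' - τ = τ' := by ring
        rw [h1, h2] at this
        rw [← this]
        congr 1
        ext ω
        simp only [hf]
        rw [← abs_neg]
        congr 1
        ring
      have hintq : IntervalIntegrable q volume τ τ' :=
        (intervalIntegrable_iff_integrableOn_Ioc_of_le hττ'.le).mpr hqint
      have hfint : IntegrableOn f (Ioc τ τ') := by
        have h1 := (hintq.comp_sub_left (τ + τ')).symm
        have hτ1 : τ + τ' - τ' = τ := by ring
        have hτ2 : τ + τ' - τ = τ' := by ring
        rw [hτ1, hτ2] at h1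
        exact (intervalIntegrable_iff_integrableOn_Ioc_of_le hττ'.le).mp h1.neg
      have hmono : ∀ ω ∈ Ioo τ m, f ω ≤ -q m := by
        intro ω hω
        simp only [hf, neg_le_neg_iff]
        refine quantile_monoOn ⟨hm0, hm1⟩ ⟨by linarith [hω.2], by linarith [hω.1]⟩ (by linarith [hω.2])
      have hnear : ∀ ω, |ω - m| < δ → |f ω - (-q m)| < d / 4 := by
        intro ω hω
        have h2m : τ + τ' = 2 * m := by rw [hm]; ring
        have : dist (τ + τ' - ω) m < δ := by
          rw [Real.dist_eq, h2m]
          have : 2 * m - ω - m = -(ω - m) := by ring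
          rw [this, abs_neg]
          exact hω
        have := Hδ this
        rw [Real.dist_eq] at this
        simp only [hf]
        calc |-q (τ + τ' - ω) - -q m| = |q (τ + τ' - ω) - q m| := by rw [← abs_neg]; congr 1; ring
          _ < d / 4 := this
      have := helper_lt f τ τ' m (-q m) d δ hτm hmτ' hmid hd0 hδ0 hfint hmono hnear
      have hθ : -q m + d = -θ := by rw [hd]; ring
      rw [hθ] at this
      rw [hrefl (q m), hrefl θ]
      exact this
    · -- q m < θ : direct
      set d := θ - q m with hd
      have hd0 : 0 < d := by simp [hd]; linarith
      obtain ⟨δ, hδ0, Hδ⟩ := Metric.continuousAt_iff.mp hcont (d / 4) (by linarith)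
      have hmono : ∀ ω ∈ Ioo τ m, q ω ≤ q m := by
        intro ω hω
        exact quantile_monoOn ⟨by linarith [hω.1], by linarith [hω.2]⟩ ⟨hm0, hm1⟩ hω.2.le
      have hnear : ∀ ω, |ω - m| < δ → |q ω - q m| < d / 4 := by
        intro ω hω
        have := Hδ (by rw [Real.dist_eq]; exact hω)
        rwa [Real.dist_eq] at this
      have := helper_lt q τ τ' m (q m) d δ hτm hmτ' hmid hd0 hδ0 hqint hmono hnear
      have hθ : q m + d = θ := by rw [hd]; ring
      rwa [hθ] at this
  constructor
  · intro θ
    rcases eq_or_ne θ (q m) with rfl | hne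
    · exact le_refl _
    · exact (key θ hne).le
  · intro θ hθ
    by_contra hne
    exact absurd (hθ (q m)) (not_le.mpr (key θ hne))
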